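/- Let G be a connected groupoid, e an object of G, and F : Y → G a constructive functor with Y a connected groupoid. Then any morphism of constructive functors Φ : F → F_{G,e} (i.e., a functor Φ : Y → Y_{G,e} over G) is an equivalence of categories; in particular, every endomorphism of F_{G,e} over G is an isomorphism. -/

import Mathlib

open CategoryTheory

universe v u v' u'

/-- A functor `F : Y ⥤ X` is *constructive* if it is faithful and every isomorphism of `X`
with domain `F.obj a` lifts uniquely to an isomorphism of `Y` with domain `a`. -/
def Constructive {Y : Type u'} {X : Type u} [Category.{v'} Y] [Category.{v} X]
    (F : Y ⥤ X) : Prop :=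
  F.Faithful ∧
    ∀ (a : Y) (x : X) (u : F.obj a ⟶ x), IsIso u →
      ∃! p : Σ b : Y, a ⟶ b,
        IsIso p.2 ∧ ∃ h : F.obj p.1 = x, F.map p.2 = u ≫ eqToHom h.symm
/-- The category `Y_{G,e}`: objects are pairs `(a, u : e ⟶ a)`, morphisms
`(a,u) ⟶ (a',u')` are morphisms `v : a ⟶ a'` of `G` with `u ≫ v = u'`
(i.e. `u' = v ∘ u`). -/
structure YObj {G : Type u} [Groupoid.{v} G] (e : G) : Type (max u v) where
  pt : G
  up : e ⟶ pt

instance {G : Type u} [Groupoid.{v} G] (e : G) : Category.{v} (YObj e) where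
  Hom p q := { v : p.pt ⟶ q.pt // p.up ≫ v = q.up }
  id p := ⟨𝟙 _, Category.comp_id _⟩
  comp f g := ⟨f.1 ≫ g.1, by rw [← Category.assoc, f.2, g.2]⟩
  id_comp f := Subtype.ext (Category.id_comp _)
  comp_id f := Subtype.ext (Category.comp_id _)
  assoc f g h := Subtype.ext (Category.assoc _ _ _)

/-- The forgetful (universal covering) functor `F_{G,e} : Y_{G,e} ⥤ G`. -/
def FGe {G : Type u} [Groupoid.{v} G] (e : G) : YObj e ⥤ G where
  obj p := p.pt
  map f := f.1
  map_id _ := rfl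
  map_comp _ _ := rfl

/-! ### Auxiliary material -/

lemma YObj.ext' {G : Type u} [Groupoid.{v} G] {e : G} {p q : YObj e}
    (h : p.pt = q.pt) (h2 : p.up ≫ eqToHom h = q.up) : p = q := by
  cases p; cases q
  cases h
  simp only [eqToHom_refl, Category.comp_id] at h2
  subst h2
  rfl

lemma YObj.up_eq {G : Type u} [Groupoid.{v} G] {e : G} {p q : YObj e} (h : p = q) :
    p.up ≫ eqToHom (congrArg YObj.pt h) = q.up := by
  subst h; simp

instance YObj.groupoid {G : Type u} [Groupoid.{v} G] (e : G) : Groupoid.{v} (YObj e) where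
  inv {p q} f := ⟨Groupoid.inv f.1, by
    apply (cancel_mono f.1).1
    rw [Category.assoc, Groupoid.inv_comp, Category.comp_id, f.2]⟩
  inv_comp f := Subtype.ext (Groupoid.inv_comp _)
  comp_inv f := Subtype.ext (Groupoid.comp_inv _)

lemma nonempty_hom_of_connected {Y : Type u'} [Groupoid.{v'} Y] [IsConnected Y]
    (a b : Y) : Nonempty (a ⟶ b) := by
  have h : Zigzag a b := isPreconnected_zigzag a b
  induction h with
  | refl => exact ⟨𝟙 a⟩
  | tail _ hz ih =>
    obtain ⟨f⟩ := ih
    cases hz with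
    | inl h => exact ⟨f ≫ h.some⟩
    | inr h => exact ⟨f ≫ Groupoid.inv h.some⟩

instance YObj.isConnected {G : Type u} [Groupoid.{v} G] (e : G) : IsConnected (YObj e) := by
  have : Nonempty (YObj e) := ⟨⟨e, 𝟙 e⟩⟩
  exact zigzag_isConnected fun p q =>
    Zigzag.of_hom ⟨Groupoid.inv p.up ≫ q.up, by
      rw [← Category.assoc, Groupoid.comp_inv, Category.id_comp]⟩

lemma constructive_FGe {G : Type u} [Groupoid.{v} G] (e : G) : Constructive (FGe e) := by
  constructor
  · exact ⟨fun {p q f g} h => Subtype.ext h⟩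
  · intro p x u _
    refine ⟨⟨⟨x, p.up ≫ u⟩, ⟨u, rfl⟩⟩, ⟨inferInstance, rfl, (Category.comp_id u).symm⟩, ?_⟩
    rintro ⟨⟨b, w⟩, v⟩ ⟨-, h, hv⟩
    have hb : b = x := h
    subst hb
    have hv1 : v.1 = u := by rw [← Category.comp_id u]; exact hv
    have hv2 : p.up ≫ v.1 = w := v.2
    have hw : w = p.up ≫ u := by rw [← hv2, hv1]
    subst hw
    exact congrArg _ (Subtype.ext hv1)

/-- Main engine: a functor over a constructive one into the universal cover is an
isomorphism of categories. -/
theorem main_aux {G : Type u} [Groupoid.{v} G] (e : G)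
    {Y : Type u'} [Groupoid.{v'} Y] [IsConnected Y]
    (Φ : Y ⥤ YObj e) (hF : Constructive (Φ ⋙ FGe e)) :
    ∃ Φ' : YObj e ⥤ Y, Φ ⋙ Φ' = 𝟭 Y ∧ Φ' ⋙ Φ = 𝟭 (YObj e) := by
  haveI hfaith : Φ.Faithful := ⟨fun {a b f g} h => hF.1.map_injective
    (show (Φ.map f).1 = (Φ.map g).1 from congrArg Subtype.val h)⟩
  -- injectivity on objects
  have hinj : ∀ b b' : Y, Φ.obj b = Φ.obj b' → b = b' := by
    intro b b' h
    obtain ⟨q⟩ := nonempty_hom_of_connected b b'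
    have hpt : (Φ.obj b).pt = (Φ.obj b').pt := congrArg YObj.pt h
    have hq : (Φ.map q).1 = eqToHom hpt := by
      have h1 := (Φ.map q).2
      have h2 : (Φ.obj b).up ≫ eqToHom hpt = (Φ.obj b').up := YObj.up_eq h
      exact (cancel_epi (Φ.obj b).up).1 (h1.trans h2.symm)
    obtain ⟨pp, -, hup⟩ := hF.2 b (Φ.obj b').pt ((Φ ⋙ FGe e).map q) (IsIso.of_groupoid _)
    have c2 : (Φ ⋙ FGe e).map (𝟙 b) = (Φ ⋙ FGe e).map q ≫ eqToHom hpt.symm := by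
      show (Φ.map (𝟙 b)).1 = (Φ.map q).1 ≫ eqToHom hpt.symm
      rw [Φ.map_id, hq, eqToHom_trans, eqToHom_refl]
      rfl
    have eA : (⟨b', q⟩ : Σ c : Y, b ⟶ c) = pp :=
      hup ⟨b', q⟩ ⟨inferInstance, rfl, (Category.comp_id _).symm⟩
    have eB : (⟨b, 𝟙 b⟩ : Σ c : Y, b ⟶ c) = pp :=
      hup ⟨b, 𝟙 b⟩ ⟨inferInstance, hpt, c2⟩
    exact congrArg Sigma.fst (eB.trans eA.symm)
  -- surjectivity on objects
  have hsurj : ∀ p : YObj e, ∃ b : Y, Φ.obj b = p := by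
    intro p
    obtain ⟨y0⟩ := (inferInstance : Nonempty Y)
    obtain ⟨⟨b, q⟩, ⟨-, h, hq⟩, -⟩ :=
      hF.2 y0 p.pt (Groupoid.inv (Φ.obj y0).up ≫ p.up) inferInstance
    refine ⟨b, YObj.ext' h ?_⟩
    have h2 : (Φ.obj y0).up ≫ (Φ.map q).1 = (Φ.obj b).up := (Φ.map q).2
    have hq' : (Φ.map q).1 = (Groupoid.inv (Φ.obj y0).up ≫ p.up) ≫ eqToHom h.symm := hq
    rw [← h2, hq']
    simp
    erw [Category.assoc, eqToHom_trans, eqToHom_refl, Category.comp_id]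
  -- fullness
  haveI : Φ.Full := by
    refine ⟨fun {y y'} w => ?_⟩
    obtain ⟨⟨b, q⟩, ⟨-, h, hq⟩, -⟩ := hF.2 y (Φ.obj y').pt w.1 (IsIso.of_groupoid _)
    have hq' : (Φ.map q).1 = w.1 ≫ eqToHom h.symm := hq
    have hb : b = y' := by
      apply hinj
      refine YObj.ext' h ?_
      have h2 : (Φ.obj y).up ≫ (Φ.map q).1 = (Φ.obj b).up := (Φ.map q).2
      rw [← h2, hq']
      erw [Category.assoc, Category.assoc, eqToHom_trans, eqToHom_refl, Category.comp_id]
      exact w.2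
    subst hb
    refine ⟨q, Subtype.ext ?_⟩
    rw [hq']
    exact Category.comp_id _
  -- the inverse functor
  have hsurj' := hsurj
  let g : YObj e → Y := fun p => (hsurj p).choose
  have hg : ∀ p, Φ.obj (g p) = p := fun p => (hsurj p).choose_spec
  let Φ' : YObj e ⥤ Y :=
    { obj := g
      map := fun {p q} f => Φ.preimage (eqToHom (hg p) ≫ f ≫ eqToHom (hg q).symm)
      map_id := fun p => Φ.map_injective (by simp)
      map_comp := fun f f' => Φ.map_injective (by simp) }
  refine ⟨Φ', ?_, ?_⟩
  · refine CategoryTheory.Functor.ext (fun y => hinj _ _ (hg (Φ.obj y))) ?_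
    intro a b f
    apply Φ.map_injective
    simp [Φ', eqToHom_map]
  · refine CategoryTheory.Functor.ext (fun p => hg p) ?_
    intro p q f
    simp [Φ', Functor.comp_map]

/-- Let `F : Y ⥤ G` be a constructive functor on a connected groupoid `G`, with `Y` a
connected groupoid. Then any morphism of constructive functors `Φ : F → F_{G,e}` is an
equivalence of categories; in particular every endomorphism of `F_{G,e}` over `G` is an
isomorphism (has a strict inverse over `G`). -/
theorem stmt6 {G : Type u} [Groupoid.{v} G] [IsConnected G] (e : G)
    {Y : Type u'} [Groupoid.{v'} Y] [IsConnected Y]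
    (F : Y ⥤ G) (hF : Constructive F)
    (Φ : Y ⥤ YObj e) (hΦ : Φ ⋙ FGe e = F) :
    Φ.IsEquivalence ∧
      ∀ (Ψ : YObj e ⥤ YObj e), Ψ ⋙ FGe e = FGe e →
        ∃ Ψ' : YObj e ⥤ YObj e, Ψ' ⋙ FGe e = FGe e ∧
          Ψ ⋙ Ψ' = 𝟭 (YObj e) ∧ Ψ' ⋙ Ψ = 𝟭 (YObj e) := by
  subst hΦ
  obtain ⟨Φ', h1, h2⟩ := main_aux e Φ hF
  constructor
  · exact (CategoryTheory.Equivalence.mk Φ Φ' (eqToIso h1.symm) (eqToIso h2)).isEquivalence_functor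
  · intro Ψ hΨ
    obtain ⟨Ψ', g1, g2⟩ := main_aux e Ψ (by rw [hΨ]; exact constructive_FGe e)
    refine ⟨Ψ', ?_, g1, g2⟩
    calc Ψ' ⋙ FGe e = Ψ' ⋙ (Ψ ⋙ FGe e) := by rw [hΨ]
      _ = (Ψ' ⋙ Ψ) ⋙ FGe e := rfl
      _ = FGe e := by rw [g2]; rfl
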